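/- arXiv:2004.11769 — 2 statements merged into one kernel-verified Lean document; each statement's English description precedes it below -/
import Mathlib

section
/- Let φ denote the standard normal density. Fix l ∈ (0,1) and u with l < u < min(1, l/(1-l)). Then for every real a, φ(a/u)/u + φ(a) - φ(a/l)/l > 0. Consequently, since ∫(φ(a) - φ(a/l)/l)da = 0, the function a ↦ φ(a/u)/u + φ(a) - φ(a/l)/l is a probability density on ℝ. -/
open MeasureTheory

lemma gauss_exp_rw (s : ℝ) (hs : 0 < s) (a : ℝ) :
    -(a / s) ^ 2 / 2 = -(1 / (2 * s ^ 2)) * a ^ 2 := by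
  rw [div_pow, neg_div, div_div, neg_mul, neg_inj, one_div, inv_mul_eq_div, mul_comm]

lemma gauss_integrable (s : ℝ) (hs : 0 < s) :
    Integrable (fun a : ℝ => (Real.sqrt (2 * Real.pi))⁻¹ * Real.exp (-(a / s) ^ 2 / 2) / s) := by
  have h : (fun a : ℝ => (Real.sqrt (2 * Real.pi))⁻¹ * Real.exp (-(a / s) ^ 2 / 2) / s)
      = fun a : ℝ => ((Real.sqrt (2 * Real.pi))⁻¹ / s) * Real.exp (-(1 / (2 * s ^ 2)) * a ^ 2) := by
    funext a
    rw [gauss_exp_rw s hs a]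
    ring
  rw [h]
  exact (integrable_exp_neg_mul_sq (by positivity)).const_mul _

lemma gauss_int (s : ℝ) (hs : 0 < s) :
    ∫ a : ℝ, (Real.sqrt (2 * Real.pi))⁻¹ * Real.exp (-(a / s) ^ 2 / 2) / s = 1 := by
  have h : (fun a : ℝ => (Real.sqrt (2 * Real.pi))⁻¹ * Real.exp (-(a / s) ^ 2 / 2) / s)
      = fun a : ℝ => ((Real.sqrt (2 * Real.pi))⁻¹ / s) * Real.exp (-(1 / (2 * s ^ 2)) * a ^ 2) := by
    funext a
    rw [gauss_exp_rw s hs a]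
    ring
  rw [h, integral_const_mul, integral_gaussian]
  have h1 : Real.pi / (1 / (2 * s ^ 2)) = 2 * Real.pi * s ^ 2 := by
    field_simp
  rw [h1]
  have h2 : Real.sqrt (2 * Real.pi * s ^ 2) = Real.sqrt (2 * Real.pi) * s := by
    rw [Real.sqrt_mul (by positivity), Real.sqrt_sq hs.le]
  rw [h2]
  have hsp : (0 : ℝ) < Real.sqrt (2 * Real.pi) := Real.sqrt_pos.mpr (by positivity)
  field_simp

/-- For `l ∈ (0,1)` and `l < u < min(1, l/(1-l))`, the function
`a ↦ φ(a/u)/u + φ(a) - φ(a/l)/l` (φ the standard normal density) is everywhere positive,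
and it is a probability density on ℝ (it integrates to 1). -/
theorem stmt9 (l u : ℝ) (hl : l ∈ Set.Ioo (0 : ℝ) 1) (hlu : l < u)
    (hu : u < min 1 (l / (1 - l))) :
    let φ : ℝ → ℝ := fun x => (Real.sqrt (2 * Real.pi))⁻¹ * Real.exp (-x ^ 2 / 2)
    (∀ a : ℝ, 0 < φ (a / u) / u + φ a - φ (a / l) / l) ∧
    (∫ a : ℝ, (φ (a / u) / u + φ a - φ (a / l) / l)) = 1 := by
  intro φ
  obtain ⟨hl0, hl1⟩ := hl
  have hu1 : u < 1 := lt_of_lt_of_le hu (min_le_left _ _)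
  have hu0 : 0 < u := hl0.trans hlu
  have hul : u * (1 - l) < l := by
    have h2 : u < l / (1 - l) := lt_of_lt_of_le hu (min_le_right _ _)
    have := (lt_div_iff₀ (by linarith : (0:ℝ) < 1 - l)).mp h2
    linarith
  have hc : (0 : ℝ) < (Real.sqrt (2 * Real.pi))⁻¹ := by positivity
  constructor
  · intro a
    set x := Real.exp (-(a / u) ^ 2 / 2) with hx
    set y := Real.exp (-a ^ 2 / 2) with hy
    set z := Real.exp (-(a / l) ^ 2 / 2) with hz
    have hz0 : 0 < z := Real.exp_pos _
    have hzx : z ≤ x := by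
      apply Real.exp_le_exp.mpr
      have h1 : a ^ 2 / u ^ 2 ≤ a ^ 2 / l ^ 2 := by
        have hinv : (u ^ 2)⁻¹ ≤ (l ^ 2)⁻¹ := by
          apply inv_anti₀ (by positivity) (by nlinarith)
        rw [div_eq_mul_inv, div_eq_mul_inv]
        exact mul_le_mul_of_nonneg_left hinv (sq_nonneg a)
      rw [div_pow, div_pow]
      linarith
    have hzy : z ≤ y := by
      apply Real.exp_le_exp.mpr
      have h1 : a ^ 2 ≤ a ^ 2 / l ^ 2 := by
        rw [le_div_iff₀ (by positivity)]
        have hl2 : l ^ 2 ≤ 1 := by nlinarith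
        nlinarith [mul_le_mul_of_nonneg_left hl2 (sq_nonneg a)]
      rw [div_pow]
      linarith
    have key : 0 < x / u + y - z / l := by
      have heq : x / u + y - z / l = (l * x + u * l * y - u * z) / (u * l) := by
        field_simp
      rw [heq]
      apply div_pos _ (by positivity)
      nlinarith [mul_le_mul_of_nonneg_left hzx hl0.le,
        mul_le_mul_of_nonneg_left hzy (mul_pos hu0 hl0).le,
        mul_pos hz0 (show (0:ℝ) < l + u * l - u by nlinarith)]
    have heq2 : φ (a / u) / u + φ a - φ (a / l) / l
        = (Real.sqrt (2 * Real.pi))⁻¹ * (x / u + y - z / l) := by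
      simp only [φ, hx, hy, hz]
      ring
    rw [heq2]
    exact mul_pos hc key
  · have hiu := gauss_integrable u hu0
    have hil := gauss_integrable l hl0
    have hi1' := gauss_integrable 1 one_pos
    have hi1 : Integrable (fun a : ℝ => φ a) := by
      simpa only [div_one] using hi1'
    have hsum : Integrable (fun a : ℝ => φ (a / u) / u + φ a) := hiu.add hi1
    rw [show (fun a : ℝ => φ (a / u) / u + φ a - φ (a / l) / l)
        = (fun a : ℝ => (φ (a / u) / u + φ a) - φ (a / l) / l) from rfl]
    rw [integral_sub hsum hil, integral_add hiu hi1]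
    have e1 : (∫ a : ℝ, φ (a / u) / u) = 1 := gauss_int u hu0
    have e2 : (∫ a : ℝ, φ (a / l) / l) = 1 := gauss_int l hl0
    have e3 : (∫ a : ℝ, φ a) = 1 := by
      have := gauss_int 1 one_pos
      simpa only [div_one] using this
    rw [e1, e2, e3]
    ring
end

section
/- Under the conditions l ∈ (0,1) and l < u < min(1, l/(1-l)), the inequality φ(a/u)/u + φ(a) - φ(a/l)/l ≥ φ(a)·exp(a^2(1-1/l^2)/2)·(l + l/u - 1)/l holds for all real a, and the right-hand side is strictly positive. -/
/-- For `l ∈ (0,1)` and `l < u < min(1, l/(1-l))`: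
`φ(a/u)/u + φ(a) - φ(a/l)/l ≥ φ(a)·exp(a²(1-1/l²)/2)·(l + l/u - 1)/l` for all real `a`,
and the right-hand side is strictly positive. -/
theorem stmt10 (l u : ℝ) (hl : l ∈ Set.Ioo (0 : ℝ) 1) (hlu : l < u)
    (hu : u < min 1 (l / (1 - l))) :
    let φ : ℝ → ℝ := fun x => (Real.sqrt (2 * Real.pi))⁻¹ * Real.exp (-x ^ 2 / 2)
    (∀ a : ℝ, φ a * Real.exp (a ^ 2 * (1 - 1 / l ^ 2) / 2) * (l + l / u - 1) / l ≤
      φ (a / u) / u + φ a - φ (a / l) / l) ∧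
    (∀ a : ℝ, 0 < φ a * Real.exp (a ^ 2 * (1 - 1 / l ^ 2) / 2) * (l + l / u - 1) / l) := by
  intro φ
  obtain ⟨hl0, hl1⟩ := hl
  have hu0 : 0 < u := hl0.trans hlu
  have hu1 : u < 1 := lt_of_lt_of_le hu (min_le_left _ _)
  have hu2 : u < l / (1 - l) := lt_of_lt_of_le hu (min_le_right _ _)
  have h1l : (0:ℝ) < 1 - l := by linarith
  have hul : u * (1 - l) < l := (lt_div_iff₀ h1l).mp hu2
  have hkey : 0 < l + l / u - 1 := by
    have : 1 - l < l / u := (lt_div_iff₀ hu0).mpr (by nlinarith)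
    linarith
  have hc : 0 < (Real.sqrt (2 * Real.pi))⁻¹ := by
    have := Real.pi_pos
    positivity
  have hφpos : ∀ x : ℝ, 0 < φ x := fun x => by
    simp only [φ]; positivity
  have hE : ∀ a : ℝ, φ a * Real.exp (a ^ 2 * (1 - 1 / l ^ 2) / 2) = φ (a / l) := by
    intro a
    simp only [φ]
    rw [mul_assoc, ← Real.exp_add]
    congr 1
    field_simp
    ring
  constructor
  · intro a
    rw [hE a]
    have h1 : φ (a / l) ≤ φ a := by
      simp only [φ]
      have harg : -(a / l) ^ 2 / 2 ≤ -a ^ 2 / 2 := by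
        rw [div_pow]
        have : a ^ 2 ≤ a ^ 2 / l ^ 2 := by
          rw [le_div_iff₀ (by positivity)]
          have hl2 : l ^ 2 ≤ 1 := by nlinarith
          nlinarith [sq_nonneg a, hl2]
        linarith
      exact mul_le_mul_of_nonneg_left (Real.exp_le_exp.mpr harg) hc.le
    have h2 : φ (a / l) ≤ φ (a / u) := by
      simp only [φ]
      have harg : -(a / l) ^ 2 / 2 ≤ -(a / u) ^ 2 / 2 := by
        rw [div_pow, div_pow]
        have : a ^ 2 / u ^ 2 ≤ a ^ 2 / l ^ 2 :=
          div_le_div_of_nonneg_left (sq_nonneg a) (by positivity) (by nlinarith)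
        linarith
      exact mul_le_mul_of_nonneg_left (Real.exp_le_exp.mpr harg) hc.le
    have h2' : φ (a / l) / u ≤ φ (a / u) / u := by gcongr
    have heq : φ (a / l) * (l + l / u - 1) / l
        = φ (a / l) + φ (a / l) / u - φ (a / l) / l := by
      field_simp
    rw [heq]
    linarith
  · intro a
    rw [hE a]
    positivity
end
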